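/- In the second-order setting, if λ̇_* ≡ λ̇_j^* = λ̇_{j'}^* for distinct indices j ≠ j' in the multiple-eigenvalue cluster, then the off-diagonal identity (Ä_t − λ B̈_t − 2λ̇_* Ḃ_t)(φ_j, φ_{j'}) = 2 C_t(z_*^j, z_*^{j'}) holds. -/

import Mathlib

open Filter

/-- continuity of a bounded bilinear form in the first argument along a sequence -/
lemma hadamard15_bilin_cont {W : Type*} [NormedAddCommGroup W] [NormedSpace ℝ W]
    (F : W →ₗ[ℝ] W →ₗ[ℝ] ℝ) (C : ℝ) (hF : ∀ u v : W, |F u v| ≤ C * ‖u‖ * ‖v‖)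
    (v : W) {us : ℕ → W} {u0 : W} (hus : Tendsto us atTop (nhds u0)) :
    Tendsto (fun ℓ => F (us ℓ) v) atTop (nhds (F u0 v)) := by
  have h0 : Tendsto (fun ℓ => F (us ℓ) v - F u0 v) atTop (nhds 0) := by
    apply squeeze_zero_norm (a := fun ℓ => C * ‖us ℓ - u0‖ * ‖v‖)
    · intro ℓ
      have h1 : F (us ℓ) v - F u0 v = F (us ℓ - u0) v := by
        rw [map_sub, LinearMap.sub_apply]
      rw [h1, Real.norm_eq_abs]
      exact hF _ _
    · have h2 : Tendsto (fun ℓ => ‖us ℓ - u0‖) atTop (nhds 0) := by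
        rw [← tendsto_sub_nhds_zero_iff] at hus
        simpa using hus.norm
      have := (h2.const_mul C).mul_const ‖v‖
      simpa using this
  have := h0.add_const (F u0 v)
  simpa using this

/-- second-order difference quotient of a C² family of bilinear forms, along a sequence
of first arguments converging to `u0`. -/
lemma hadamard15_quot2 {W : Type*} [NormedAddCommGroup W] [NormedSpace ℝ W]
    (F : ℝ → W →ₗ[ℝ] W →ₗ[ℝ] ℝ) (t : ℝ) (F' F'' : W →ₗ[ℝ] W →ₗ[ℝ] ℝ)
    (C'' : ℝ) (hF''bdd : ∀ u v : W, |F'' u v| ≤ C'' * ‖u‖ * ‖v‖)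
    (hder2 : ∀ ε > (0:ℝ), ∃ η > (0:ℝ), ∀ h : ℝ, h ≠ 0 → |h| < η →
      ∀ u v : W, ‖u‖ ≤ 1 → ‖v‖ ≤ 1 →
        |F (t + h) u v - F t u v - h * F' u v - h ^ 2 / 2 * F'' u v| ≤ ε * h ^ 2)
    (hseq : ℕ → ℝ) (hseq0 : ∀ ℓ, hseq ℓ ≠ 0)
    (hseqlim : Tendsto hseq atTop (nhds 0))
    (v : W) {us : ℕ → W} {u0 : W} (hus : Tendsto us atTop (nhds u0)) :
    Tendsto (fun ℓ => (F (t + hseq ℓ) (us ℓ) v - F t (us ℓ) v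
        - hseq ℓ * F' (us ℓ) v) / (hseq ℓ) ^ 2) atTop (nhds (F'' u0 v / 2)) := by
  have hMpos : (0:ℝ) < ‖u0‖ + ‖v‖ + 1 := by positivity
  set M : ℝ := ‖u0‖ + ‖v‖ + 1 with hM
  -- main part: quotient minus F''(us ℓ) v / 2 tends to 0
  have hmain : Tendsto (fun ℓ => (F (t + hseq ℓ) (us ℓ) v - F t (us ℓ) v
      - hseq ℓ * F' (us ℓ) v) / (hseq ℓ) ^ 2 - F'' (us ℓ) v / 2) atTop (nhds 0) := by
    rw [NormedAddCommGroup.tendsto_nhds_zero]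
    intro ε hε
    have hε2 : (0:ℝ) < ε / (2 * M ^ 2) := by positivity
    obtain ⟨η, hη, hbd⟩ := hder2 (ε / (2 * M ^ 2)) hε2
    have hev1 : ∀ᶠ ℓ in atTop, |hseq ℓ| < η := by
      have := Metric.tendsto_nhds.mp hseqlim η hη
      filter_upwards [this] with ℓ hℓ
      simpa [Real.dist_eq] using hℓ
    have hev2 : ∀ᶠ ℓ in atTop, ‖us ℓ - u0‖ < 1 := by
      have := Metric.tendsto_nhds.mp hus 1 one_pos
      filter_upwards [this] with ℓ hℓ
      simpa [dist_eq_norm] using hℓ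
    filter_upwards [hev1, hev2] with ℓ h1 h2
    have hu : ‖us ℓ‖ ≤ M := by
      have := norm_sub_norm_le (us ℓ) u0
      rw [hM]
      have hv : (0:ℝ) ≤ ‖v‖ := norm_nonneg _
      linarith
    have hMne : M ≠ 0 := ne_of_gt hMpos
    -- apply hbd to scaled vectors
    have hub : ‖(M⁻¹ : ℝ) • us ℓ‖ ≤ 1 := by
      rw [norm_smul, Real.norm_eq_abs, abs_inv, abs_of_pos hMpos]
      rw [inv_mul_le_iff₀ hMpos]
      simpa using hu
    have hvb : ‖(M⁻¹ : ℝ) • v‖ ≤ 1 := by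
      rw [norm_smul, Real.norm_eq_abs, abs_inv, abs_of_pos hMpos]
      rw [inv_mul_le_iff₀ hMpos]
      have : ‖v‖ ≤ M := by rw [hM]; have := norm_nonneg u0; linarith
      simpa using this
    have hkey := hbd (hseq ℓ) (hseq0 ℓ) h1 ((M⁻¹ : ℝ) • us ℓ) ((M⁻¹ : ℝ) • v) hub hvb
    -- scaling identities
    have hs : ∀ (G : W →ₗ[ℝ] W →ₗ[ℝ] ℝ), G ((M⁻¹ : ℝ) • us ℓ) ((M⁻¹ : ℝ) • v)
        = M⁻¹ * (M⁻¹ * G (us ℓ) v) := by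
      intro G
      simp only [map_smul, LinearMap.smul_apply, smul_eq_mul]
    rw [hs (F (t + hseq ℓ)), hs (F t), hs F', hs F''] at hkey
    have hkey2 : |F (t + hseq ℓ) (us ℓ) v - F t (us ℓ) v - hseq ℓ * F' (us ℓ) v
        - hseq ℓ ^ 2 / 2 * F'' (us ℓ) v| ≤ ε / (2 * M ^ 2) * hseq ℓ ^ 2 * M ^ 2 := by
      have h3 : |M⁻¹ * (M⁻¹ * (F (t + hseq ℓ) (us ℓ) v - F t (us ℓ) v
          - hseq ℓ * F' (us ℓ) v - hseq ℓ ^ 2 / 2 * F'' (us ℓ) v))|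
          ≤ ε / (2 * M ^ 2) * hseq ℓ ^ 2 := by
        have : M⁻¹ * (M⁻¹ * (F (t + hseq ℓ) (us ℓ) v - F t (us ℓ) v
            - hseq ℓ * F' (us ℓ) v - hseq ℓ ^ 2 / 2 * F'' (us ℓ) v))
            = M⁻¹ * (M⁻¹ * F (t + hseq ℓ) (us ℓ) v) - M⁻¹ * (M⁻¹ * F t (us ℓ) v)
            - hseq ℓ * (M⁻¹ * (M⁻¹ * F' (us ℓ) v))
            - hseq ℓ ^ 2 / 2 * (M⁻¹ * (M⁻¹ * F'' (us ℓ) v)) := by ring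
        rw [this]
        exact hkey
      rw [abs_mul, abs_mul, abs_inv, abs_of_pos hMpos] at h3
      set x := |F (t + hseq ℓ) (us ℓ) v - F t (us ℓ) v - hseq ℓ * F' (us ℓ) v
          - hseq ℓ ^ 2 / 2 * F'' (us ℓ) v| with hxdef
      have e1 : x = M ^ 2 * (M⁻¹ * (M⁻¹ * x)) := by
        rw [← mul_assoc, ← mul_assoc, show M ^ 2 * M⁻¹ * M⁻¹ = 1 by
          rw [sq]; field_simp, one_mul]
      rw [e1]
      calc M ^ 2 * (M⁻¹ * (M⁻¹ * x)) ≤ M ^ 2 * (ε / (2 * M ^ 2) * hseq ℓ ^ 2) :=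
            mul_le_mul_of_nonneg_left h3 (pow_pos hMpos 2).le
        _ = ε / (2 * M ^ 2) * hseq ℓ ^ 2 * M ^ 2 := by ring
    have hh2 : (0:ℝ) < hseq ℓ ^ 2 :=
      lt_of_le_of_ne (sq_nonneg _) (Ne.symm (pow_ne_zero _ (hseq0 ℓ)))
    rw [Real.norm_eq_abs]
    have heq : (F (t + hseq ℓ) (us ℓ) v - F t (us ℓ) v - hseq ℓ * F' (us ℓ) v)
        / (hseq ℓ) ^ 2 - F'' (us ℓ) v / 2
        = (F (t + hseq ℓ) (us ℓ) v - F t (us ℓ) v - hseq ℓ * F' (us ℓ) v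
          - hseq ℓ ^ 2 / 2 * F'' (us ℓ) v) / hseq ℓ ^ 2 := by
      have hne : hseq ℓ ^ 2 ≠ 0 := pow_ne_zero _ (hseq0 ℓ)
      rw [div_sub' hne]
      congr 1
      ring
    rw [heq, abs_div, abs_of_pos hh2, div_lt_iff₀ hh2]
    calc |F (t + hseq ℓ) (us ℓ) v - F t (us ℓ) v - hseq ℓ * F' (us ℓ) v
          - hseq ℓ ^ 2 / 2 * F'' (us ℓ) v|
        ≤ ε / (2 * M ^ 2) * hseq ℓ ^ 2 * M ^ 2 := hkey2
      _ = ε / 2 * hseq ℓ ^ 2 := by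
          have hne : M ^ 2 ≠ 0 := ne_of_gt (pow_pos hMpos 2)
          field_simp
      _ < ε * hseq ℓ ^ 2 := by nlinarith
  -- continuity part
  have hcont : Tendsto (fun ℓ => F'' (us ℓ) v / 2) atTop (nhds (F'' u0 v / 2)) := by
    have h0 : Tendsto (fun ℓ => F'' (us ℓ) v - F'' u0 v) atTop (nhds 0) := by
      apply squeeze_zero_norm (a := fun ℓ => C'' * ‖us ℓ - u0‖ * ‖v‖)
      · intro ℓ
        have h1 : F'' (us ℓ) v - F'' u0 v = F'' (us ℓ - u0) v := by
          rw [map_sub, LinearMap.sub_apply]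
        rw [h1, Real.norm_eq_abs]
        exact hF''bdd _ _
      · have h2 : Tendsto (fun ℓ => ‖us ℓ - u0‖) atTop (nhds 0) := by
          rw [← tendsto_sub_nhds_zero_iff] at hus
          simpa using hus.norm
        have := (h2.const_mul C'').mul_const ‖v‖
        simpa using this
    have := (h0.add_const (F'' u0 v)).div_const 2
    simp only [zero_add] at this
    convert this using 2 with ℓ
    ring
  have := hmain.add hcont
  simp only [zero_add] at this
  convert this using 2 with ℓ
  ring

/-- symmetry of the first derivative of a symmetric C² family of bilinear forms -/
lemma hadamard15_symm {W : Type*} [NormedAddCommGroup W] [NormedSpace ℝ W]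
    (F : ℝ → W →ₗ[ℝ] W →ₗ[ℝ] ℝ) (t : ℝ)
    (hFsymm : ∀ t', ∀ u v : W, F t' u v = F t' v u)
    (F' F'' : W →ₗ[ℝ] W →ₗ[ℝ] ℝ)
    (C'' : ℝ) (hF''bdd : ∀ u v : W, |F'' u v| ≤ C'' * ‖u‖ * ‖v‖)
    (hder2 : ∀ ε > (0:ℝ), ∃ η > (0:ℝ), ∀ h : ℝ, h ≠ 0 → |h| < η →
      ∀ u v : W, ‖u‖ ≤ 1 → ‖v‖ ≤ 1 →
        |F (t + h) u v - F t u v - h * F' u v - h ^ 2 / 2 * F'' u v| ≤ ε * h ^ 2) :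
    ∀ u v : W, F' u v = F' v u := by
  -- first for unit vectors
  have hunit : ∀ u v : W, ‖u‖ ≤ 1 → ‖v‖ ≤ 1 → F' u v = F' v u := by
    intro u v hu hv
    have habs : |F' u v - F' v u| ≤ 0 := by
      apply le_of_forall_pos_le_add
      intro ε hε
      obtain ⟨η, hη, hbd⟩ := hder2 1 one_pos
      set h : ℝ := min (η / 2) (ε / (2 + |C''| + 1)) with hh
      have hhpos : 0 < h := by
        apply lt_min (by linarith)
        have : (0:ℝ) < 2 + |C''| + 1 := by positivity
        positivity
      have hhlt : |h| < η := by
        rw [abs_of_pos hhpos]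
        calc h ≤ η / 2 := min_le_left _ _
          _ < η := by linarith
      have k1 := hbd h (ne_of_gt hhpos) hhlt u v hu hv
      have k2 := hbd h (ne_of_gt hhpos) hhlt v u hv hu
      rw [hFsymm (t + h) v u, hFsymm t v u] at k2
      have k3 : |h * F' u v + h ^ 2 / 2 * F'' u v - (h * F' v u + h ^ 2 / 2 * F'' v u)|
          ≤ 2 * h ^ 2 := by
        have := abs_sub_abs_le_abs_sub (F (t + h) u v - F t u v - h * F' u v
          - h ^ 2 / 2 * F'' u v) (F (t + h) u v - F t u v - h * F' v u - h ^ 2 / 2 * F'' v u)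
        have h4 := abs_sub (F (t + h) u v - F t u v - h * F' u v - h ^ 2 / 2 * F'' u v)
          (F (t + h) u v - F t u v - h * F' v u - h ^ 2 / 2 * F'' v u)
        calc |h * F' u v + h ^ 2 / 2 * F'' u v - (h * F' v u + h ^ 2 / 2 * F'' v u)|
            = |(F (t + h) u v - F t u v - h * F' v u - h ^ 2 / 2 * F'' v u)
              - (F (t + h) u v - F t u v - h * F' u v - h ^ 2 / 2 * F'' u v)| := by
              congr 1; ring
          _ ≤ |F (t + h) u v - F t u v - h * F' v u - h ^ 2 / 2 * F'' v u|
              + |F (t + h) u v - F t u v - h * F' u v - h ^ 2 / 2 * F'' u v| :=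
              abs_sub _ _
          _ ≤ 1 * h ^ 2 + 1 * h ^ 2 := add_le_add k2 k1
          _ = 2 * h ^ 2 := by ring
      have k5 : |F' u v - F' v u| ≤ 2 * h + h / 2 * (|F'' u v| + |F'' v u|) := by
        have e1 : h * (F' u v - F' v u) = (h * F' u v + h ^ 2 / 2 * F'' u v
            - (h * F' v u + h ^ 2 / 2 * F'' v u)) - h ^ 2 / 2 * F'' u v
            + h ^ 2 / 2 * F'' v u := by ring
        have e2 : |h * (F' u v - F' v u)| ≤ 2 * h ^ 2 + h ^ 2 / 2 * |F'' u v|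
            + h ^ 2 / 2 * |F'' v u| := by
          rw [e1]
          calc _ ≤ |h * F' u v + h ^ 2 / 2 * F'' u v - (h * F' v u + h ^ 2 / 2 * F'' v u)
                - h ^ 2 / 2 * F'' u v| + |h ^ 2 / 2 * F'' v u| := abs_add_le _ _
            _ ≤ |h * F' u v + h ^ 2 / 2 * F'' u v - (h * F' v u + h ^ 2 / 2 * F'' v u)|
                + |h ^ 2 / 2 * F'' u v| + |h ^ 2 / 2 * F'' v u| := by
                have := abs_sub (h * F' u v + h ^ 2 / 2 * F'' u v
                  - (h * F' v u + h ^ 2 / 2 * F'' v u)) (h ^ 2 / 2 * F'' u v)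
                linarith
            _ ≤ 2 * h ^ 2 + h ^ 2 / 2 * |F'' u v| + h ^ 2 / 2 * |F'' v u| := by
                rw [abs_mul, abs_mul]
                have hs : |h ^ 2 / 2| = h ^ 2 / 2 := abs_of_nonneg (by positivity)
                rw [hs]
                linarith [k3]
        rw [abs_mul, abs_of_pos hhpos] at e2
        have := (mul_le_mul_iff_right₀ hhpos).mp (by nlinarith [e2] :
          h * |F' u v - F' v u| ≤ h * (2 * h + h / 2 * (|F'' u v| + |F'' v u|)))
        exact this
      have hbF : |F'' u v| + |F'' v u| ≤ 2 * |C''| := by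
        have b1 : |F'' u v| ≤ |C''| := by
          calc |F'' u v| ≤ C'' * ‖u‖ * ‖v‖ := hF''bdd u v
            _ ≤ |C''| * ‖u‖ * ‖v‖ := by
                apply mul_le_mul_of_nonneg_right _ (norm_nonneg v)
                exact mul_le_mul_of_nonneg_right (le_abs_self C'') (norm_nonneg u)
            _ ≤ |C''| * 1 * 1 := by
                apply mul_le_mul (mul_le_mul_of_nonneg_left hu (abs_nonneg _)) hv
                  (norm_nonneg _) (by positivity)
            _ = |C''| := by ring
        have b2 : |F'' v u| ≤ |C''| := by
          calc |F'' v u| ≤ C'' * ‖v‖ * ‖u‖ := hF''bdd v u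
            _ ≤ |C''| * ‖v‖ * ‖u‖ := by
                apply mul_le_mul_of_nonneg_right _ (norm_nonneg u)
                exact mul_le_mul_of_nonneg_right (le_abs_self C'') (norm_nonneg v)
            _ ≤ |C''| * 1 * 1 := by
                apply mul_le_mul (mul_le_mul_of_nonneg_left hv (abs_nonneg _)) hu
                  (norm_nonneg _) (by positivity)
            _ = |C''| := by ring
        linarith
      have hfinal : |F' u v - F' v u| ≤ h * (2 + |C''|) := by
        calc |F' u v - F' v u| ≤ 2 * h + h / 2 * (|F'' u v| + |F'' v u|) := k5
          _ ≤ 2 * h + h / 2 * (2 * |C''|) := by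
              apply add_le_add_right
              exact mul_le_mul_of_nonneg_left hbF (by positivity)
          _ = h * (2 + |C''|) := by ring
      have hle : h * (2 + |C''|) ≤ ε := by
        have h1 : h ≤ ε / (2 + |C''| + 1) := min_le_right _ _
        have h2 : (0:ℝ) < 2 + |C''| + 1 := by positivity
        calc h * (2 + |C''|) ≤ ε / (2 + |C''| + 1) * (2 + |C''|) :=
              mul_le_mul_of_nonneg_right h1 (by positivity)
          _ ≤ ε := by
              rw [div_mul_eq_mul_div, div_le_iff₀ h2]
              nlinarith
      linarith [hfinal, hle]
    have := abs_nonpos_iff.mp habs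
    linarith [abs_nonneg (F' u v - F' v u), this, sub_eq_zero.mp this]
  -- general case by scaling
  intro u v
  have hM : (0:ℝ) < ‖u‖ + ‖v‖ + 1 := by positivity
  set M : ℝ := ‖u‖ + ‖v‖ + 1 with hMdef
  have hMne : M ≠ 0 := ne_of_gt hM
  have hub : ‖(M⁻¹ : ℝ) • u‖ ≤ 1 := by
    rw [norm_smul, Real.norm_eq_abs, abs_inv, abs_of_pos hM, inv_mul_le_iff₀ hM]
    have := norm_nonneg v; simp only [mul_one]; rw [hMdef]; linarith
  have hvb : ‖(M⁻¹ : ℝ) • v‖ ≤ 1 := by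
    rw [norm_smul, Real.norm_eq_abs, abs_inv, abs_of_pos hM, inv_mul_le_iff₀ hM]
    have := norm_nonneg u; simp only [mul_one]; rw [hMdef]; linarith
  have := hunit ((M⁻¹ : ℝ) • u) ((M⁻¹ : ℝ) • v) hub hvb
  simp only [map_smul, LinearMap.smul_apply, smul_eq_mul] at this
  have hMi : M⁻¹ ≠ 0 := inv_ne_zero hMne
  field_simp at this
  linarith [this]

/-- first-order difference quotient -/
lemma hadamard15_quot1 {W : Type*} [NormedAddCommGroup W] [NormedSpace ℝ W]
    (F : ℝ → W →ₗ[ℝ] W →ₗ[ℝ] ℝ) (t : ℝ) (F' F'' : W →ₗ[ℝ] W →ₗ[ℝ] ℝ)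
    (C' : ℝ) (hF'bdd : ∀ u v : W, |F' u v| ≤ C' * ‖u‖ * ‖v‖)
    (C'' : ℝ) (hF''bdd : ∀ u v : W, |F'' u v| ≤ C'' * ‖u‖ * ‖v‖)
    (hder2 : ∀ ε > (0:ℝ), ∃ η > (0:ℝ), ∀ h : ℝ, h ≠ 0 → |h| < η →
      ∀ u v : W, ‖u‖ ≤ 1 → ‖v‖ ≤ 1 →
        |F (t + h) u v - F t u v - h * F' u v - h ^ 2 / 2 * F'' u v| ≤ ε * h ^ 2)
    (hseq : ℕ → ℝ) (hseq0 : ∀ ℓ, hseq ℓ ≠ 0)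
    (hseqlim : Tendsto hseq atTop (nhds 0))
    (v : W) {us : ℕ → W} {u0 : W} (hus : Tendsto us atTop (nhds u0)) :
    Tendsto (fun ℓ => (F (t + hseq ℓ) (us ℓ) v - F t (us ℓ) v) / hseq ℓ)
      atTop (nhds (F' u0 v)) := by
  have h2 := hadamard15_quot2 F t F' F'' C'' hF''bdd hder2 hseq hseq0 hseqlim v hus
  have hcont := hadamard15_bilin_cont F' C' hF'bdd v hus
  have hcomb := (hseqlim.mul h2).add hcont
  simp only [zero_mul, zero_add] at hcomb
  apply hcomb.congr
  intro ℓ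
  have hne : hseq ℓ ≠ 0 := hseq0 ℓ
  field_simp
  ring

/-- off-diagonal identity in the second-order setting: if
`λ̇_* = λ̇_j^* = λ̇_{j'}^*` for distinct `j ≠ j'` in the cluster, then
`(Ä_t − λB̈_t − 2λ̇_* Ḃ_t)(φ_j, φ_{j'}) = 2 C_t(z_*^j, z_*^{j'})`. -/
theorem hadamard_stmt15
    {V : Type*} [NormedAddCommGroup V] [InnerProductSpace ℝ V] [CompleteSpace V]
    {X : Type*} [NormedAddCommGroup X] [InnerProductSpace ℝ X] [CompleteSpace X]
    (ι : V →L[ℝ] X) (hι : Function.Injective ι) (hcompact : IsCompactOperator ι)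
    (A : ℝ → V →ₗ[ℝ] V →ₗ[ℝ] ℝ) (B : ℝ → X →ₗ[ℝ] X →ₗ[ℝ] ℝ)
    (hAsymm : ∀ t', ∀ u v : V, A t' u v = A t' v u)
    (hBsymm : ∀ t', ∀ u v : X, B t' u v = B t' v u)
    (CA : ℝ) (hAbdd : ∀ t', ∀ u v : V, |A t' u v| ≤ CA * ‖u‖ * ‖v‖)
    (CB : ℝ) (hBbdd : ∀ t', ∀ u v : X, |B t' u v| ≤ CB * ‖u‖ * ‖v‖)
    (δ : ℝ) (hδ : 0 < δ)
    (hAcoer : ∀ t', ∀ v : V, δ * ‖v‖ ^ 2 ≤ A t' v v)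
    (hBcoer : ∀ t', ∀ v : X, δ * ‖v‖ ^ 2 ≤ B t' v v)
    (t : ℝ)
    (A' : V →ₗ[ℝ] V →ₗ[ℝ] ℝ) (B' : X →ₗ[ℝ] X →ₗ[ℝ] ℝ)
    (CA' : ℝ) (hA'bdd : ∀ u v : V, |A' u v| ≤ CA' * ‖u‖ * ‖v‖)
    (CB' : ℝ) (hB'bdd : ∀ u v : X, |B' u v| ≤ CB' * ‖u‖ * ‖v‖)
    (A'' : V →ₗ[ℝ] V →ₗ[ℝ] ℝ) (B'' : X →ₗ[ℝ] X →ₗ[ℝ] ℝ)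
    (CA'' : ℝ) (hA''bdd : ∀ u v : V, |A'' u v| ≤ CA'' * ‖u‖ * ‖v‖)
    (CB'' : ℝ) (hB''bdd : ∀ u v : X, |B'' u v| ≤ CB'' * ‖u‖ * ‖v‖)
    (hAder2 : ∀ ε > (0:ℝ), ∃ η > (0:ℝ), ∀ h : ℝ, h ≠ 0 → |h| < η →
      ∀ u v : V, ‖u‖ ≤ 1 → ‖v‖ ≤ 1 →
        |A (t + h) u v - A t u v - h * A' u v - h ^ 2 / 2 * A'' u v| ≤ ε * h ^ 2)
    (hBder2 : ∀ ε > (0:ℝ), ∃ η > (0:ℝ), ∀ h : ℝ, h ≠ 0 → |h| < η →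
      ∀ u v : X, ‖u‖ ≤ 1 → ‖v‖ ≤ 1 →
        |B (t + h) u v - B t u v - h * B' u v - h ^ 2 / 2 * B'' u v| ≤ ε * h ^ 2)
    (lam : ℕ → ℝ → ℝ) (u : ℕ → ℝ → V) (j j' : ℕ) (hjj' : j ≠ j')
    -- `B_{t'}`-orthonormal eigenfunctions for `λ_j(t')`, `λ_{j'}(t')`
    (horth : ∀ t', ∀ i i' : ℕ, (i = j ∨ i = j') → (i' = j ∨ i' = j') →
      B t' (ι (u i t')) (ι (u i' t')) = if i = i' then 1 else 0)
    (heig : ∀ t', ∀ i : ℕ, (i = j ∨ i = j') →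
      ∀ v : V, A t' (u i t') v = lam i t' * B t' (ι (u i t')) (ι v))
    (lambda : ℝ) (hlambda : lambda = lam j t) (hlambda' : lambda = lam j' t)
    (Y : Submodule ℝ V)
    (hYeig : ∀ w : V, w ∈ Y ↔ ∀ v : V, A t w v = lambda * B t (ι w) (ι v))
    (P : V →L[ℝ] V)
    (hPY : ∀ v : V, v - P v ∈ Y)
    (hPorth : ∀ v : V, ∀ y ∈ Y, B t (ι (P v)) (ι y) = 0)
    (hseq : ℕ → ℝ) (hseq0 : ∀ ℓ, hseq ℓ ≠ 0)
    (hseqlim : Filter.Tendsto hseq Filter.atTop (nhds 0))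
    (φj φj' : V) (hφjY : φj ∈ Y) (hφj'Y : φj' ∈ Y)
    (hφnorm : B t (ι φj) (ι φj) = 1) (hφ'norm : B t (ι φj') (ι φj') = 1)
    (hφorth : B t (ι φj) (ι φj') = 0)
    (hφlim : Filter.Tendsto (fun ℓ => u j (t + hseq ℓ)) Filter.atTop (nhds φj))
    (hφ'lim : Filter.Tendsto (fun ℓ => u j' (t + hseq ℓ)) Filter.atTop (nhds φj'))
    -- equal first-derivative limits `λ̇_* = λ̇_j^* = λ̇_{j'}^*`
    (lamdot : ℝ)
    (hlamdot : Filter.Tendsto (fun ℓ => (lam j (t + hseq ℓ) - lam j t) / hseq ℓ)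
      Filter.atTop (nhds lamdot))
    (hlamdot' : Filter.Tendsto (fun ℓ => (lam j' (t + hseq ℓ) - lam j' t) / hseq ℓ)
      Filter.atTop (nhds lamdot))
    -- the correctors `z_*^j`, `z_*^{j'} ∈ PV`
    (zj zj' : V) (hzjP : P zj = zj) (hzj'P : P zj' = zj')
    (hzj : ∀ v : V,
      A t zj v - lambda * B t (ι zj) (ι v) =
        -(A' φj v - lamdot * B t (ι φj) (ι v) - lambda * B' (ι φj) (ι v)))
    (hzj' : ∀ v : V,
      A t zj' v - lambda * B t (ι zj') (ι v) =
        -(A' φj' v - lamdot * B t (ι φj') (ι v) - lambda * B' (ι φj') (ι v))) :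
    A'' φj φj' - lambda * B'' (ι φj) (ι φj') - 2 * lamdot * B' (ι φj) (ι φj') =
      2 * (A t zj zj' - lambda * B t (ι zj) (ι zj')) := by
  -- symmetry of the derivative forms
  have hA'symm : ∀ u v : V, A' u v = A' v u :=
    hadamard15_symm A t hAsymm A' A'' CA'' hA''bdd hAder2
  have hB'symm : ∀ u v : X, B' u v = B' v u :=
    hadamard15_symm B t hBsymm B' B'' CB'' hB''bdd hBder2
  -- convergence of images under ι
  have hιlim : Filter.Tendsto (fun ℓ => ι (u j (t + hseq ℓ))) Filter.atTop (nhds (ι φj)) :=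
    (ι.continuous.tendsto φj).comp hφlim
  -- difference quotient of the eigenvalue
  have hld : Filter.Tendsto (fun ℓ => (lam j (t + hseq ℓ) - lambda) / hseq ℓ)
      Filter.atTop (nhds lamdot) := by
    rw [hlambda]; exact hlamdot
  -- convergence of the eigenvalue itself
  have hmu : Filter.Tendsto (fun ℓ => lam j (t + hseq ℓ)) Filter.atTop (nhds lambda) := by
    have h1 := (hseqlim.mul hld).add_const lambda
    simp only [zero_mul, zero_add] at h1
    apply h1.congr
    intro ℓ
    have hne := hseq0 ℓ
    field_simp
    ring
  -- key limit: C_t(w_ℓ, v)/h_ℓ tends to the corrector data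
  have lemC : ∀ v : V, Filter.Tendsto
      (fun ℓ => (A t (u j (t + hseq ℓ)) v - lambda * B t (ι (u j (t + hseq ℓ))) (ι v)) / hseq ℓ)
      Filter.atTop
      (nhds (lamdot * B t (ι φj) (ι v) + lambda * B' (ι φj) (ι v) - A' φj v)) := by
    intro v
    have hA1 := hadamard15_quot1 A t A' A'' CA' hA'bdd CA'' hA''bdd hAder2 hseq hseq0 hseqlim v hφlim
    have hB1 := hadamard15_quot1 B t B' B'' CB' hB'bdd CB'' hB''bdd hBder2 hseq hseq0 hseqlim (ι v) hιlim
    have hBt : Filter.Tendsto (fun ℓ => B t (ι (u j (t + hseq ℓ))) (ι v))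
        Filter.atTop (nhds (B t (ι φj) (ι v))) :=
      hadamard15_bilin_cont (B t) CB (hBbdd t) (ι v) hιlim
    have hBth : Filter.Tendsto (fun ℓ => B (t + hseq ℓ) (ι (u j (t + hseq ℓ))) (ι v))
        Filter.atTop (nhds (B t (ι φj) (ι v))) := by
      have h1 := (hseqlim.mul hB1).add hBt
      simp only [zero_mul, zero_add] at h1
      apply h1.congr
      intro ℓ
      have hne := hseq0 ℓ
      field_simp
      ring
    have comb := ((hld.mul hBth).add (hB1.const_mul lambda)).sub hA1
    apply comb.congr
    intro ℓ
    have hne := hseq0 ℓ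
    have F1 := heig (t + hseq ℓ) j (Or.inl rfl) v
    field_simp
    linear_combination -F1
  -- the main identity/limit, for a pair (φ, z) satisfying the corrector equation
  have main : ∀ (φ z : V), φ ∈ Y →
      (∀ v : V, A t z v - lambda * B t (ι z) (ι v) =
        -(A' φ v - lamdot * B t (ι φ) (ι v) - lambda * B' (ι φ) (ι v))) →
      Filter.Tendsto (fun ℓ => ((lamdot * hseq ℓ - (lam j (t + hseq ℓ) - lambda)) / hseq ℓ ^ 2)
          * B t (ι (u j (t + hseq ℓ))) (ι φ)) Filter.atTop
        (nhds (lambda * (B'' (ι φj) (ι φ) / 2) - A'' φj φ / 2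
          + (lamdot * B t (ι φj) (ι z) + lambda * B' (ι φj) (ι z) - A' φj z)
          + lamdot * B' (ι φj) (ι φ))) := by
    intro φ z hφY hz
    have hSA := hadamard15_quot2 A t A' A'' CA'' hA''bdd hAder2 hseq hseq0 hseqlim φ hφlim
    have hSB := hadamard15_quot2 B t B' B'' CB'' hB''bdd hBder2 hseq hseq0 hseqlim (ι φ) hιlim
    have hTc := lemC z
    have hB'c : Filter.Tendsto (fun ℓ => B' (ι (u j (t + hseq ℓ))) (ι φ))
        Filter.atTop (nhds (B' (ι φj) (ι φ))) :=
      hadamard15_bilin_cont B' CB' hB'bdd (ι φ) hιlim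
    have hTb := hld.mul hB'c
    have comb := (((hmu.mul hSB).sub hSA).add hTc).add hTb
    apply comb.congr
    intro ℓ
    have hne := hseq0 ℓ
    have F1 := heig (t + hseq ℓ) j (Or.inl rfl) φ
    have F2 : A t (u j (t + hseq ℓ)) φ = lambda * B t (ι (u j (t + hseq ℓ))) (ι φ) := by
      rw [hAsymm t (u j (t + hseq ℓ)) φ, (hYeig φ).mp hφY (u j (t + hseq ℓ)),
        hBsymm t (ι φ) (ι (u j (t + hseq ℓ)))]
    have F3 := hz (u j (t + hseq ℓ))
    rw [hAsymm t z (u j (t + hseq ℓ)), hBsymm t (ι z) (ι (u j (t + hseq ℓ))),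
      hA'symm φ (u j (t + hseq ℓ)), hB'symm (ι φ) (ι (u j (t + hseq ℓ))),
      hBsymm t (ι φ) (ι (u j (t + hseq ℓ)))] at F3
    field_simp
    linear_combination -F1 + F2 + (hseq ℓ) * F3
  -- apply to the diagonal pair (φj, zj) to get convergence of the coefficient c
  have mainD := main φj zj hφjY hzj
  have hb0d : Filter.Tendsto (fun ℓ => B t (ι (u j (t + hseq ℓ))) (ι φj))
      Filter.atTop (nhds 1) := by
    have h1 := hadamard15_bilin_cont (B t) CB (hBbdd t) (ι φj) hιlim
    rwa [hφnorm] at h1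
  have hcd : Filter.Tendsto (fun ℓ => (lamdot * hseq ℓ - (lam j (t + hseq ℓ) - lambda)) / hseq ℓ ^ 2)
      Filter.atTop (nhds ((lambda * (B'' (ι φj) (ι φj) / 2) - A'' φj φj / 2
          + (lamdot * B t (ι φj) (ι zj) + lambda * B' (ι φj) (ι zj) - A' φj zj)
          + lamdot * B' (ι φj) (ι φj)))) := by
    have hdiv := mainD.div hb0d one_ne_zero
    have hev : ∀ᶠ ℓ in Filter.atTop, B t (ι (u j (t + hseq ℓ))) (ι φj) ≠ 0 :=
      hb0d.eventually_ne one_ne_zero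
    have heq : (fun ℓ => ((lamdot * hseq ℓ - (lam j (t + hseq ℓ) - lambda)) / hseq ℓ ^ 2
        * B t (ι (u j (t + hseq ℓ))) (ι φj)) / B t (ι (u j (t + hseq ℓ))) (ι φj))
        =ᶠ[Filter.atTop] (fun ℓ => (lamdot * hseq ℓ - (lam j (t + hseq ℓ) - lambda)) / hseq ℓ ^ 2) := by
      filter_upwards [hev] with ℓ hℓ
      exact mul_div_cancel_right₀ _ hℓ
    have := hdiv.congr' heq
    simpa using this
  -- off-diagonal: the product tends to 0
  have hb0' : Filter.Tendsto (fun ℓ => B t (ι (u j (t + hseq ℓ))) (ι φj'))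
      Filter.atTop (nhds 0) := by
    have h1 := hadamard15_bilin_cont (B t) CB (hBbdd t) (ι φj') hιlim
    rwa [hφorth] at h1
  have hz0 : Filter.Tendsto (fun ℓ => ((lamdot * hseq ℓ - (lam j (t + hseq ℓ) - lambda)) / hseq ℓ ^ 2)
      * B t (ι (u j (t + hseq ℓ))) (ι φj')) Filter.atTop (nhds 0) := by
    have := hcd.mul hb0'
    simpa using this
  have mainOff := main φj' zj' hφj'Y hzj'
  have huniq := tendsto_nhds_unique hz0 mainOff
  -- conclude
  have hfin := hzj zj'
  linarith [huniq, hfin]
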